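/- arXiv:1703.07865 — 8 statements merged into one kernel-verified Lean document; each statement's English description precedes it below -/
import Mathlib

section
/- Let n ≥ 2, let L be a real symmetric positive semidefinite n×n matrix with L𝟙ₙ = 0 whose kernel is exactly span(𝟙ₙ), let H = diag(a₁,…,aₙ) with aᵢ > 0, and let b ∈ ℝⁿ, d ∈ ℝ. Assume there exists ε ∈ [0,1) such that for every y ∈ ℝⁿ with 𝟙ₙᵀy = 0 one has −ε yᵀy ≤ yᵀ(Iₙ − LHL)y ≤ ε yᵀy. Let x⋆ be the unique minimizer of f(x) = ½ xᵀHx + bᵀx over {x ∈ ℝⁿ : 𝟙ₙᵀx = d}. Fix q ∈ ℕ and let Φ_q(x) = x − L ∑_{p=0}^{q} (Iₙ − LHL)^p (Lb + LHx). Then for every x⁰ with 𝟙ₙᵀx⁰ = d, the iterates xᵏ = Φ_qᵏ(x⁰) converge to x⋆ exponentially: there exist C ≥ 0 and r ∈ (0,1), independent of x⁰ and k, such that ‖xᵏ − x⋆‖ ≤ C rᵏ ‖x⁰ − x⋆‖ for all k ∈ ℕ. -/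
open Matrix Finset

lemma my_dot_nonneg {n : ℕ} (v : Fin n → ℝ) : 0 ≤ v ⬝ᵥ v :=
  Finset.sum_nonneg fun _ _ => mul_self_nonneg _

lemma my_dot_sumsq {n : ℕ} (v : Fin n → ℝ) : v ⬝ᵥ v = ∑ i, v i ^ 2 := by
  simp [dotProduct, sq]

lemma my_sym_dot {n : ℕ} {A : Matrix (Fin n) (Fin n) ℝ} (hA : A.IsSymm) (x y : Fin n → ℝ) :
    x ⬝ᵥ (A *ᵥ y) = y ⬝ᵥ (A *ᵥ x) := by
  rw [Matrix.dotProduct_mulVec, ← Matrix.mulVec_transpose, hA.eq, dotProduct_comm]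

lemma my_frob {n : ℕ} (A : Matrix (Fin n) (Fin n) ℝ) (v : Fin n → ℝ) :
    (A *ᵥ v) ⬝ᵥ (A *ᵥ v) ≤ (∑ i, ∑ j, (A i j)^2) * (v ⬝ᵥ v) := by
  have h1 : ∀ i : Fin n, (A *ᵥ v) i * (A *ᵥ v) i ≤ (∑ j, (A i j)^2) * (v ⬝ᵥ v) := by
    intro i
    calc (A *ᵥ v) i * (A *ᵥ v) i = (∑ j, A i j * v j)^2 := by
          simp [Matrix.mulVec, dotProduct, sq]
      _ ≤ (∑ j, (A i j)^2) * ∑ j, (v j)^2 :=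
          Finset.sum_mul_sq_le_sq_mul_sq Finset.univ (fun j => A i j) v
      _ = (∑ j, (A i j)^2) * (v ⬝ᵥ v) := by rw [my_dot_sumsq]
  calc (A *ᵥ v) ⬝ᵥ (A *ᵥ v) = ∑ i, (A *ᵥ v) i * (A *ᵥ v) i := rfl
    _ ≤ ∑ i : Fin n, (∑ j, (A i j)^2) * (v ⬝ᵥ v) := Finset.sum_le_sum (fun i _ => h1 i)
    _ = (∑ i, ∑ j, (A i j)^2) * (v ⬝ᵥ v) := by rw [Finset.sum_mul]

lemma my_norm_sq_le {n : ℕ} (v : Fin n → ℝ) : ‖v‖^2 ≤ v ⬝ᵥ v := by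
  have h : ‖v‖ ≤ Real.sqrt (v ⬝ᵥ v) := by
    refine (pi_norm_le_iff_of_nonneg (Real.sqrt_nonneg _)).mpr fun i => ?_
    rw [Real.norm_eq_abs, ← Real.sqrt_sq_eq_abs]
    apply Real.sqrt_le_sqrt
    rw [my_dot_sumsq]
    exact Finset.single_le_sum (fun j _ => sq_nonneg (v j)) (Finset.mem_univ i)
  calc ‖v‖^2 ≤ (Real.sqrt (v ⬝ᵥ v))^2 := pow_le_pow_left₀ (norm_nonneg v) h 2
    _ = v ⬝ᵥ v := Real.sq_sqrt (my_dot_nonneg v)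

lemma my_dot_le_norm {n : ℕ} (v : Fin n → ℝ) : v ⬝ᵥ v ≤ n * ‖v‖^2 := by
  calc v ⬝ᵥ v = ∑ i, v i * v i := rfl
    _ ≤ ∑ _i : Fin n, ‖v‖^2 := Finset.sum_le_sum fun i _ => by
        have h : |v i| ≤ ‖v‖ := (Real.norm_eq_abs (v i)) ▸ norm_le_pi_norm v i
        nlinarith [abs_nonneg (v i), le_abs_self (v i), neg_abs_le (v i)]
    _ = n * ‖v‖^2 := by simp [Finset.sum_const, Finset.card_univ, nsmul_eq_mul]

set_option maxHeartbeats 1000000 in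
/-- Exponential convergence of the DANA iterates to the unique
constrained minimizer. -/
theorem dana_exponential_convergence
    (n : ℕ) (hn : 2 ≤ n)
    (L H : Matrix (Fin n) (Fin n) ℝ)
    (a : Fin n → ℝ) (ha : ∀ i, 0 < a i) (hH : H = Matrix.diagonal a)
    (hLsym : L.IsSymm) (hLpsd : L.PosSemidef)
    (hL1 : L *ᵥ (fun _ => (1 : ℝ)) = 0)
    (hker : ∀ x : Fin n → ℝ, L *ᵥ x = 0 ↔ ∃ c : ℝ, x = c • (fun _ => (1 : ℝ)))
    (b : Fin n → ℝ) (d : ℝ)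
    (ε : ℝ) (hε0 : 0 ≤ ε) (hε1 : ε < 1)
    (heig : ∀ y : Fin n → ℝ, (fun _ => (1 : ℝ)) ⬝ᵥ y = 0 →
      -(ε * (y ⬝ᵥ y)) ≤ y ⬝ᵥ ((1 - L * H * L) *ᵥ y) ∧
      y ⬝ᵥ ((1 - L * H * L) *ᵥ y) ≤ ε * (y ⬝ᵥ y))
    (xstar : Fin n → ℝ)
    (hfeas : (fun _ => (1 : ℝ)) ⬝ᵥ xstar = d)
    (hmin : ∀ x : Fin n → ℝ, (fun _ => (1 : ℝ)) ⬝ᵥ x = d →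
      (1 / 2) * (xstar ⬝ᵥ (H *ᵥ xstar)) + b ⬝ᵥ xstar ≤
      (1 / 2) * (x ⬝ᵥ (H *ᵥ x)) + b ⬝ᵥ x)
    (huniq : ∀ y : Fin n → ℝ, (fun _ => (1 : ℝ)) ⬝ᵥ y = d →
      (∀ x : Fin n → ℝ, (fun _ => (1 : ℝ)) ⬝ᵥ x = d →
        (1 / 2) * (y ⬝ᵥ (H *ᵥ y)) + b ⬝ᵥ y ≤ (1 / 2) * (x ⬝ᵥ (H *ᵥ x)) + b ⬝ᵥ x) →
      y = xstar)
    (q : ℕ)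
    (Φ : (Fin n → ℝ) → (Fin n → ℝ))
    (hΦ : ∀ x, Φ x = x - L *ᵥ
      ((∑ p ∈ Finset.range (q + 1), (1 - L * H * L) ^ p) *ᵥ (L *ᵥ b + (L * H) *ᵥ x))) :
    ∃ C : ℝ, 0 ≤ C ∧ ∃ r : ℝ, 0 < r ∧ r < 1 ∧
      ∀ x0 : Fin n → ℝ, (fun _ => (1 : ℝ)) ⬝ᵥ x0 = d →
        ∀ k : ℕ, ‖Φ^[k] x0 - xstar‖ ≤ C * r ^ k * ‖x0 - xstar‖ := by
  classical
  set o : Fin n → ℝ := fun _ => (1 : ℝ) with ho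
  set ε₀ : ℝ := (ε + 1) / 2 with hε₀def
  have hε₀pos : 0 < ε₀ := by rw [hε₀def]; linarith
  have hε₀lt : ε₀ < 1 := by rw [hε₀def]; linarith
  set M : Matrix (Fin n) (Fin n) ℝ := 1 - L * H * L with hM
  have heig' : ∀ y : Fin n → ℝ, o ⬝ᵥ y = 0 →
      -(ε₀ * (y ⬝ᵥ y)) ≤ y ⬝ᵥ (M *ᵥ y) ∧ y ⬝ᵥ (M *ᵥ y) ≤ ε₀ * (y ⬝ᵥ y) := by
    intro y hy
    obtain ⟨h1, h2⟩ := heig y hy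
    have hq := my_dot_nonneg y
    have hεle : ε ≤ ε₀ := by rw [hε₀def]; linarith
    constructor <;> nlinarith
  have hLt : Lᵀ = L := hLsym
  have hHsym : H.IsSymm := by rw [hH]; exact Matrix.isSymm_diagonal a
  have hLHL : (L*H*L)ᵀ = L*H*L := by
    rw [Matrix.transpose_mul, Matrix.transpose_mul, hLt, hHsym.eq, ← mul_assoc]
  have hMsym : M.IsSymm := by
    show Mᵀ = M
    rw [hM, Matrix.transpose_sub, Matrix.transpose_one, hLHL]
  -- vectors in range of L are orthogonal to ones
  have hLV : ∀ z : Fin n → ℝ, o ⬝ᵥ (L *ᵥ z) = 0 := by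
    intro z
    rw [my_sym_dot hLsym, hL1, dotProduct_zero]
  have hMV : ∀ y : Fin n → ℝ, o ⬝ᵥ y = 0 → o ⬝ᵥ (M *ᵥ y) = 0 := by
    intro y hy
    have h1 : (L*H*L) *ᵥ y = L *ᵥ ((H*L) *ᵥ y) := by
      rw [Matrix.mulVec_mulVec, mul_assoc]
    rw [hM, Matrix.sub_mulVec, Matrix.one_mulVec, dotProduct_sub, hy, h1, hLV]
    ring
  -- min / max of a
  have hnpos : 0 < n := lt_of_lt_of_le two_pos hn
  haveI : Nonempty (Fin n) := ⟨⟨0, hnpos⟩⟩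
  have hne : (Finset.univ : Finset (Fin n)).Nonempty := Finset.univ_nonempty
  set amin := Finset.univ.inf' hne a with hamin
  set amax := Finset.univ.sup' hne a with hamax
  have haminpos : 0 < amin := (Finset.lt_inf'_iff hne).mpr fun i _ => ha i
  have haminle : ∀ i, amin ≤ a i := fun i => Finset.inf'_le a (Finset.mem_univ i)
  have hamaxle : ∀ i, a i ≤ amax := fun i => Finset.le_sup' a (Finset.mem_univ i)
  have hamaxpos : 0 < amax := lt_of_lt_of_le (ha ⟨0, hnpos⟩) (hamaxle _)
  have hHv : ∀ (v : Fin n → ℝ) (i : Fin n), (H *ᵥ v) i = a i * v i := by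
    intro v i; rw [hH]; exact Matrix.mulVec_diagonal a v i
  have hdotH_lb : ∀ v : Fin n → ℝ, amin * (v ⬝ᵥ v) ≤ v ⬝ᵥ (H *ᵥ v) := by
    intro v
    calc amin * (v ⬝ᵥ v) = ∑ i, amin * (v i * v i) := by
          rw [dotProduct, Finset.mul_sum]
      _ ≤ ∑ i, v i * (H *ᵥ v) i := Finset.sum_le_sum fun i _ => by
          rw [hHv]; nlinarith [haminle i, mul_self_nonneg (v i)]
      _ = v ⬝ᵥ (H *ᵥ v) := rfl
  have hdotH_ub : ∀ v : Fin n → ℝ, v ⬝ᵥ (H *ᵥ v) ≤ amax * (v ⬝ᵥ v) := by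
    intro v
    calc v ⬝ᵥ (H *ᵥ v) = ∑ i, v i * (H *ᵥ v) i := rfl
      _ ≤ ∑ i, amax * (v i * v i) := Finset.sum_le_sum fun i _ => by
          rw [hHv]; nlinarith [hamaxle i, mul_self_nonneg (v i)]
      _ = amax * (v ⬝ᵥ v) := by rw [dotProduct, Finset.mul_sum]
  have hoo : o ⬝ᵥ o = (n : ℝ) := by simp [ho, dotProduct]
  have hncast : (0:ℝ) < (n:ℝ) := by exact_mod_cast hnpos
  -- first order condition
  have horth : ∀ y : Fin n → ℝ, o ⬝ᵥ y = 0 → y ⬝ᵥ (H *ᵥ xstar + b) = 0 := by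
    intro y hy
    set α := y ⬝ᵥ (H *ᵥ xstar) + y ⬝ᵥ b with hα
    set β := y ⬝ᵥ (H *ᵥ y) with hβ
    have hβ0 : 0 ≤ β := by
      rw [hβ, dotProduct]
      apply Finset.sum_nonneg; intro i _
      rw [hHv]; nlinarith [(ha i).le, mul_self_nonneg (y i)]
    have key : ∀ t : ℝ, 0 ≤ t * α + t^2/2 * β := by
      intro t
      have hfeas' : o ⬝ᵥ (xstar + t • y) = d := by
        rw [dotProduct_add, dotProduct_smul, hy, hfeas]
        simp
      have h := hmin (xstar + t • y) hfeas'
      have hsymH' : xstar ⬝ᵥ (H *ᵥ y) = y ⬝ᵥ (H *ᵥ xstar) := my_sym_dot hHsym xstar y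
      have hby : b ⬝ᵥ y = y ⬝ᵥ b := dotProduct_comm b y
      have hexp : (1/2) * ((xstar + t•y) ⬝ᵥ (H *ᵥ (xstar + t•y))) + b ⬝ᵥ (xstar + t•y)
          = (1/2) * (xstar ⬝ᵥ (H *ᵥ xstar)) + b ⬝ᵥ xstar + (t * α + t^2/2 * β) := by
        rw [hα, hβ]
        simp only [Matrix.mulVec_add, Matrix.mulVec_smul, dotProduct_add,
          add_dotProduct, dotProduct_smul, smul_dotProduct,
          smul_eq_mul]
        rw [hsymH', hby]; ring
      rw [hexp] at h
      linarith
    have hαz : α = 0 := by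
      by_cases hb : β = 0
      · have h1 := key 1; have h2 := key (-1)
        rw [hb] at h1 h2
        nlinarith
      · have hbpos : 0 < β := lt_of_le_of_ne hβ0 (Ne.symm hb)
        have h := key (-(α/β))
        have h2 : -(α/β) * α + (-(α/β))^2/2 * β = -(α^2)/(2*β) := by
          field_simp; ring
        rw [h2] at h
        have h3 : (0:ℝ) ≤ -α^2 := by
          calc (0:ℝ) = 0 * (2*β) := by ring
            _ ≤ (-α^2/(2*β)) * (2*β) :=
                mul_le_mul_of_nonneg_right h (by positivity)
            _ = -α^2 := by field_simp
        nlinarith [sq_nonneg α]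
    rw [dotProduct_add]
    exact hαz
  -- L (H xstar + b) = 0
  have hLu : L *ᵥ (H *ᵥ xstar + b) = 0 := by
    set u : Fin n → ℝ := H *ᵥ xstar + b with hu
    set s : ℝ := (o ⬝ᵥ u) / n with hs
    set y : Fin n → ℝ := u - s • o with hy
    have hyV : o ⬝ᵥ y = 0 := by
      rw [hy, dotProduct_sub, dotProduct_smul, hoo, smul_eq_mul, hs]
      field_simp; ring
    have h0 := horth y hyV
    have hu' : u = y + s • o := by rw [hy]; abel
    have hyy : y ⬝ᵥ y = 0 := by
      have hyo : y ⬝ᵥ o = 0 := by rw [dotProduct_comm]; exact hyV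
      have : y ⬝ᵥ u = y ⬝ᵥ y + s * (y ⬝ᵥ o) := by
        rw [hu', dotProduct_add, dotProduct_smul, smul_eq_mul]
      rw [hyo, mul_zero, add_zero] at this
      rw [← this]; exact h0
    have hy0 : y = 0 := by
      funext i
      have hz := (Finset.sum_eq_zero_iff_of_nonneg
        (fun j _ => mul_self_nonneg (y j))).mp hyy i (Finset.mem_univ i)
      exact mul_self_eq_zero.mp hz
    have hus : u = s • o := by rw [hu', hy0]; simp
    rw [hus, Matrix.mulVec_smul, hL1, smul_zero]
  have hfix : L *ᵥ b + (L * H) *ᵥ xstar = 0 := by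
    have h1 : (L*H) *ᵥ xstar = L *ᵥ (H *ᵥ xstar) := (Matrix.mulVec_mulVec xstar L H).symm
    rw [h1, add_comm, ← Matrix.mulVec_add]
    exact hLu
  -- geometric sum identity
  set S : Matrix (Fin n) (Fin n) ℝ := ∑ p ∈ Finset.range (q+1), M ^ p with hS
  have hgeom : (1 - M) * S = 1 - M^(q+1) := by
    have h1 := mul_geom_sum M (q+1)
    have h2 : (1 - M) * S = -((M - 1) * S) := by rw [← neg_sub, neg_mul]
    rw [h2, hS, h1, neg_sub]
  -- error recursion
  have herr : ∀ x : Fin n → ℝ,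
      Φ x - xstar = (x - xstar) - L *ᵥ (S *ᵥ ((L*H) *ᵥ (x - xstar))) := by
    intro x
    have hb' : L *ᵥ b = -((L*H) *ᵥ xstar) := eq_neg_of_add_eq_zero_left hfix
    have harg : L *ᵥ b + (L * H) *ᵥ x = (L*H) *ᵥ (x - xstar) := by
      rw [Matrix.mulVec_sub, hb']; abel
    rw [hΦ x, harg]
    abel
  have hwrec : ∀ x : Fin n → ℝ,
      (L*H) *ᵥ (Φ x - xstar) = (M^(q+1)) *ᵥ ((L*H) *ᵥ (x - xstar)) := by
    intro x
    rw [herr x, Matrix.mulVec_sub]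
    set w := (L*H) *ᵥ (x - xstar) with hw
    have h1 : (L*H) *ᵥ (L *ᵥ (S *ᵥ w)) = ((1 - M) * S) *ᵥ w := by
      rw [Matrix.mulVec_mulVec, Matrix.mulVec_mulVec, hM, sub_sub_cancel]
    rw [h1, hgeom, Matrix.sub_mulVec, Matrix.one_mulVec]
    abel
  -- one-step contraction on the orthogonal complement
  have hcontr1 : ∀ y : Fin n → ℝ, o ⬝ᵥ y = 0 →
      (M *ᵥ y) ⬝ᵥ (M *ᵥ y) ≤ ε₀^2 * (y ⬝ᵥ y) := by
    intro y hy
    set w := M *ᵥ y with hw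
    set x := ε₀⁻¹ • w with hx
    have hwV : o ⬝ᵥ w = 0 := hMV y hy
    have hxV : o ⬝ᵥ x = 0 := by rw [hx, dotProduct_smul, hwV, smul_zero]
    have hplusV : o ⬝ᵥ (x + y) = 0 := by rw [dotProduct_add, hxV, hy, add_zero]
    have hsubV : o ⬝ᵥ (x - y) = 0 := by rw [dotProduct_sub, hxV, hy, sub_zero]
    have hsym_xy : y ⬝ᵥ (M *ᵥ x) = x ⬝ᵥ (M *ᵥ y) := my_sym_dot hMsym y x
    have e1 : (x+y) ⬝ᵥ (M *ᵥ (x+y))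
        = x ⬝ᵥ (M *ᵥ x) + 2 * (x ⬝ᵥ (M *ᵥ y)) + y ⬝ᵥ (M *ᵥ y) := by
      rw [Matrix.mulVec_add, dotProduct_add, add_dotProduct,
        add_dotProduct, hsym_xy]; ring
    have e2 : (x-y) ⬝ᵥ (M *ᵥ (x-y))
        = x ⬝ᵥ (M *ᵥ x) - 2 * (x ⬝ᵥ (M *ᵥ y)) + y ⬝ᵥ (M *ᵥ y) := by
      rw [Matrix.mulVec_sub, dotProduct_sub, sub_dotProduct,
        sub_dotProduct, hsym_xy]; ring
    have q1 : (x+y) ⬝ᵥ (x+y) = x ⬝ᵥ x + 2*(x ⬝ᵥ y) + y ⬝ᵥ y := by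
      rw [dotProduct_add, add_dotProduct, add_dotProduct,
        dotProduct_comm y x]; ring
    have q2 : (x-y) ⬝ᵥ (x-y) = x ⬝ᵥ x - 2*(x ⬝ᵥ y) + y ⬝ᵥ y := by
      rw [dotProduct_sub, sub_dotProduct, sub_dotProduct,
        dotProduct_comm y x]; ring
    have b1 := (heig' (x+y) hplusV).2
    have b2 := (heig' (x-y) hsubV).1
    have hp2 : x ⬝ᵥ (M *ᵥ y) ≤ (ε₀/2) * (x ⬝ᵥ x + y ⬝ᵥ y) := by
      rw [e1, q1] at b1
      rw [e2, q2] at b2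
      linarith
    have hxw : x ⬝ᵥ (M *ᵥ y) = ε₀⁻¹ * (w ⬝ᵥ w) := by
      rw [hx, smul_dotProduct, smul_eq_mul, ← hw]
    have hxx : x ⬝ᵥ x = ε₀⁻¹ * (ε₀⁻¹ * (w ⬝ᵥ w)) := by
      rw [hx, smul_dotProduct, dotProduct_smul, smul_eq_mul, smul_eq_mul]
    have hwnn := my_dot_nonneg w
    have hynn := my_dot_nonneg y
    have hinv : ε₀ * ε₀⁻¹ = 1 := mul_inv_cancel₀ (ne_of_gt hε₀pos)
    rw [hxw, hxx] at hp2
    have hp3 := mul_le_mul_of_nonneg_left hp2 hε₀pos.le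
    have hLside : ε₀ * (ε₀⁻¹ * (w ⬝ᵥ w)) = w ⬝ᵥ w := by
      rw [← mul_assoc, hinv, one_mul]
    have hRside : ε₀ * (ε₀ / 2 * (ε₀⁻¹ * (ε₀⁻¹ * (w ⬝ᵥ w)) + y ⬝ᵥ y))
        = (ε₀ * ε₀⁻¹) * ((ε₀ * ε₀⁻¹) * (w ⬝ᵥ w)) / 2 + ε₀^2 * (y ⬝ᵥ y) / 2 := by
      ring
    rw [hLside, hRside, hinv, one_mul, one_mul] at hp3
    linarith
  -- iterated contraction
  have hcontrm : ∀ (m : ℕ) (y : Fin n → ℝ), o ⬝ᵥ y = 0 →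
      o ⬝ᵥ ((M^m) *ᵥ y) = 0 ∧
      ((M^m) *ᵥ y) ⬝ᵥ ((M^m) *ᵥ y) ≤ (ε₀^2)^m * (y ⬝ᵥ y) := by
    intro m
    induction m with
    | zero => intro y hy; simp [Matrix.one_mulVec, hy]
    | succ m ih =>
      intro y hy
      obtain ⟨ihV, ihQ⟩ := ih y hy
      have h1 : (M^(m+1)) *ᵥ y = M *ᵥ ((M^m) *ᵥ y) := by
        rw [Matrix.mulVec_mulVec, ← pow_succ']
      constructor
      · rw [h1]; exact hMV _ ihV
      · rw [h1]
        calc (M *ᵥ ((M^m) *ᵥ y)) ⬝ᵥ (M *ᵥ ((M^m) *ᵥ y))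
            ≤ ε₀^2 * (((M^m) *ᵥ y) ⬝ᵥ ((M^m) *ᵥ y)) := hcontr1 _ ihV
          _ ≤ ε₀^2 * ((ε₀^2)^m * (y ⬝ᵥ y)) :=
              mul_le_mul_of_nonneg_left ihQ (sq_nonneg ε₀)
          _ = (ε₀^2)^(m+1) * (y ⬝ᵥ y) := by ring
  -- lower bound κ * (e⬝e) ≤ (LHe)⬝(LHe) on the complement
  set κ : ℝ := amin^2 * (1 - ε₀) / amax with hκ
  have hκpos : 0 < κ := by
    rw [hκ]
    apply div_pos _ hamaxpos
    exact mul_pos (pow_pos haminpos 2) (by linarith)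
  have hlow : ∀ e : Fin n → ℝ, o ⬝ᵥ e = 0 →
      κ * (e ⬝ᵥ e) ≤ ((L*H) *ᵥ e) ⬝ᵥ ((L*H) *ᵥ e) := by
    intro e heV
    set u2 : Fin n → ℝ := H *ᵥ e with hu2
    set s2 : ℝ := (o ⬝ᵥ u2) / n with hs2
    set v : Fin n → ℝ := u2 - s2 • o with hv
    have hvV : o ⬝ᵥ v = 0 := by
      rw [hv, dotProduct_sub, dotProduct_smul, hoo, smul_eq_mul, hs2]
      field_simp; ring
    have hLHe : (L*H) *ᵥ e = L *ᵥ v := by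
      rw [hv, Matrix.mulVec_sub, Matrix.mulVec_smul, hL1, smul_zero, sub_zero, hu2,
        Matrix.mulVec_mulVec]
    have hev : e ⬝ᵥ v = e ⬝ᵥ u2 := by
      have heo : e ⬝ᵥ o = 0 := by rw [dotProduct_comm]; exact heV
      rw [hv, dotProduct_sub, dotProduct_smul, smul_eq_mul, heo, mul_zero,
        sub_zero]
    have heu : amin * (e ⬝ᵥ e) ≤ e ⬝ᵥ u2 := hdotH_lb e
    have hcs : (e ⬝ᵥ v)^2 ≤ (e ⬝ᵥ e) * (v ⬝ᵥ v) := by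
      have h := Finset.sum_mul_sq_le_sq_mul_sq Finset.univ e v
      rw [my_dot_sumsq e, my_dot_sumsq v]
      exact h
    have hvv : amin^2 * (e ⬝ᵥ e) ≤ v ⬝ᵥ v := by
      rcases eq_or_lt_of_le (my_dot_nonneg e) with h0 | hpos
      · nlinarith [my_dot_nonneg v]
      · have h1 : amin * (e ⬝ᵥ e) ≤ e ⬝ᵥ v := hev ▸ heu
        have h2 : (amin * (e ⬝ᵥ e))^2 ≤ (e ⬝ᵥ v)^2 := by
          nlinarith [mul_nonneg haminpos.le (my_dot_nonneg e)]
        nlinarith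
    have hqv := (heig' v hvV).2
    have hMv : v ⬝ᵥ (M *ᵥ v) = v ⬝ᵥ v - (L *ᵥ v) ⬝ᵥ (H *ᵥ (L *ᵥ v)) := by
      rw [hM, Matrix.sub_mulVec, Matrix.one_mulVec, dotProduct_sub]
      congr 1
      have h3 : (L*H*L) *ᵥ v = L *ᵥ (H *ᵥ (L *ᵥ v)) := by
        rw [Matrix.mulVec_mulVec, Matrix.mulVec_mulVec, mul_assoc]
      rw [h3, my_sym_dot hLsym]
      exact dotProduct_comm _ _
    have hHub := hdotH_ub (L *ᵥ v)
    have hLvlb : (1 - ε₀) * (v ⬝ᵥ v) ≤ amax * ((L *ᵥ v) ⬝ᵥ (L *ᵥ v)) := by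
      rw [hMv] at hqv
      linarith
    rw [hLHe, hκ, div_mul_eq_mul_div, div_le_iff₀ hamaxpos]
    nlinarith [mul_le_mul_of_nonneg_left hvv (by linarith : (0:ℝ) ≤ 1 - ε₀), hLvlb]
  -- assemble the constants
  set F : ℝ := ∑ i, ∑ j, ((L*H) i j)^2 with hF
  have hFnn : 0 ≤ F :=
    Finset.sum_nonneg fun i _ => Finset.sum_nonneg fun j _ => sq_nonneg _
  set r : ℝ := ε₀^(q+1) with hr
  have hrpos : 0 < r := pow_pos hε₀pos _
  have hrlt : r < 1 := pow_lt_one₀ hε₀pos.le hε₀lt (Nat.succ_ne_zero q)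
  set C : ℝ := Real.sqrt (F * n / κ) with hC
  refine ⟨C, Real.sqrt_nonneg _, r, hrpos, hrlt, ?_⟩
  intro x0 hx0 k
  have hconstr : ∀ m : ℕ, o ⬝ᵥ (Φ^[m] x0) = d := by
    intro m
    induction m with
    | zero => simpa using hx0
    | succ m ih =>
      rw [Function.iterate_succ_apply', hΦ, dotProduct_sub, hLV, ih, sub_zero]
  have heVk : ∀ m : ℕ, o ⬝ᵥ (Φ^[m] x0 - xstar) = 0 := fun m => by
    rw [dotProduct_sub, hconstr m, hfeas, sub_self]
  set w0 : Fin n → ℝ := (L*H) *ᵥ (x0 - xstar) with hw0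
  have hwk : ∀ m : ℕ, (L*H) *ᵥ (Φ^[m] x0 - xstar) = (M^((q+1)*m)) *ᵥ w0 := by
    intro m
    induction m with
    | zero => simp [hw0]
    | succ m ih =>
      have hexp : (q+1)*(m+1) = (q+1) + (q+1)*m := by ring
      rw [Function.iterate_succ_apply', hwrec, ih, Matrix.mulVec_mulVec, ← pow_add, hexp]
  have hw0V : o ⬝ᵥ w0 = 0 := by
    rw [hw0, ← Matrix.mulVec_mulVec]
    exact hLV _
  -- quantitative chain
  have hQw : ((M^((q+1)*k)) *ᵥ w0) ⬝ᵥ ((M^((q+1)*k)) *ᵥ w0)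
      ≤ (ε₀^2)^((q+1)*k) * (w0 ⬝ᵥ w0) := (hcontrm ((q+1)*k) w0 hw0V).2
  have hQe : κ * ((Φ^[k] x0 - xstar) ⬝ᵥ (Φ^[k] x0 - xstar))
      ≤ (ε₀^2)^((q+1)*k) * (w0 ⬝ᵥ w0) := by
    calc κ * ((Φ^[k] x0 - xstar) ⬝ᵥ (Φ^[k] x0 - xstar))
        ≤ ((L*H) *ᵥ (Φ^[k] x0 - xstar)) ⬝ᵥ ((L*H) *ᵥ (Φ^[k] x0 - xstar)) :=
          hlow _ (heVk k)
      _ = ((M^((q+1)*k)) *ᵥ w0) ⬝ᵥ ((M^((q+1)*k)) *ᵥ w0) := by rw [hwk k]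
      _ ≤ (ε₀^2)^((q+1)*k) * (w0 ⬝ᵥ w0) := hQw
  have hQw0 : w0 ⬝ᵥ w0 ≤ F * ((x0 - xstar) ⬝ᵥ (x0 - xstar)) := my_frob (L*H) _
  have hE0 : (x0 - xstar) ⬝ᵥ (x0 - xstar) ≤ n * ‖x0 - xstar‖^2 := my_dot_le_norm _
  have hpowr : (ε₀^2)^((q+1)*k) = (r^k)^2 := by
    rw [hr, ← pow_mul, ← pow_mul, ← pow_mul]
    congr 1
    ring
  rw [hpowr] at hQe
  have h1 := my_norm_sq_le (Φ^[k] x0 - xstar)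
  have hchain : κ * ‖Φ^[k] x0 - xstar‖^2
      ≤ (r^k)^2 * (F * ((n:ℝ) * ‖x0 - xstar‖^2)) := by
    have p1 := mul_le_mul_of_nonneg_left h1 hκpos.le
    have p2 := mul_le_mul_of_nonneg_left hQw0 (sq_nonneg (r^k))
    have p3 := mul_le_mul_of_nonneg_left hE0 (mul_nonneg (sq_nonneg (r^k)) hFnn)
    nlinarith [p1, hQe, p2, p3]
  have hCsq : C^2 = F * n / κ := by
    rw [hC]
    exact Real.sq_sqrt (by positivity)
  have hsq : ‖Φ^[k] x0 - xstar‖^2 ≤ (C * r^k * ‖x0 - xstar‖)^2 := by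
    have hrw : (C * r^k * ‖x0 - xstar‖)^2 = (F * n / κ) * ((r^k)^2 * ‖x0 - xstar‖^2) := by
      rw [mul_pow, mul_pow, hCsq]; ring
    rw [hrw, div_mul_eq_mul_div, le_div_iff₀ hκpos]
    nlinarith [hchain]
  have hCnn : 0 ≤ C := Real.sqrt_nonneg _
  exact le_of_pow_le_pow_left₀ two_ne_zero
    (mul_nonneg (mul_nonneg hCnn (pow_nonneg hrpos.le k)) (norm_nonneg _)) hsq
end

section
/- Let n ≥ 2, let L be a real symmetric positive semidefinite n×n matrix with L𝟙ₙ = 0 whose kernel is exactly span(𝟙ₙ), and let H = diag(a₁,…,aₙ) with aᵢ > 0. Let T be any real orthogonal n×n matrix whose last column is 𝟙ₙ/√n and let J = [I_{n−1} 0_{n−1}] ∈ ℝ^{(n−1)×n}. Then the matrix M = J Tᵀ L H L T Jᵀ is symmetric positive definite. -/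
open Matrix

/-- With `L` a connected-graph Laplacian, `H = diag(a)`, `aᵢ > 0`,
`T` orthogonal with last column `𝟙/√n`, and `J = [I_{n−1} 0]`, the matrix
`M = J Tᵀ L H L T Jᵀ` is symmetric positive definite. -/
theorem reduced_hessian_posdef
    (n : ℕ) (hn : 2 ≤ n)
    (L H : Matrix (Fin n) (Fin n) ℝ)
    (a : Fin n → ℝ) (ha : ∀ i, 0 < a i) (hH : H = Matrix.diagonal a)
    (hLsym : L.IsSymm) (hLpsd : L.PosSemidef)
    (hL1 : L *ᵥ (fun _ => (1 : ℝ)) = 0)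
    (hker : ∀ x : Fin n → ℝ, L *ᵥ x = 0 ↔ ∃ c : ℝ, x = c • (fun _ => (1 : ℝ)))
    (T : Matrix (Fin n) (Fin n) ℝ)
    (hT : Tᵀ * T = 1)
    (hTlast : ∀ i : Fin n, T i ⟨n - 1, by omega⟩ = 1 / Real.sqrt n)
    (J : Matrix (Fin (n - 1)) (Fin n) ℝ)
    (hJ : J = Matrix.of fun (i : Fin (n - 1)) (j : Fin n) =>
      if (i : ℕ) = (j : ℕ) then (1 : ℝ) else 0) :
    (J * Tᵀ * L * H * L * T * Jᵀ).PosDef := by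
  subst hH
  set B : Matrix (Fin n) (Fin (n - 1)) ℝ := L * T * Jᵀ with hB
  have hM : J * Tᵀ * L * Matrix.diagonal a * L * T * Jᵀ
      = Bᵀ * Matrix.diagonal a * B := by
    simp only [hB, Matrix.transpose_mul, Matrix.transpose_transpose, hLsym.eq,
      Matrix.mul_assoc]
  -- injectivity of B
  have hBinj : ∀ x : Fin (n - 1) → ℝ, B *ᵥ x = 0 → x = 0 := by
    intro x hx
    have h1 : L *ᵥ (T *ᵥ (Jᵀ *ᵥ x)) = 0 := by
      rw [Matrix.mulVec_mulVec, Matrix.mulVec_mulVec]; exact hx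
    obtain ⟨c, hc⟩ := (hker _).mp h1
    have h2 : Jᵀ *ᵥ x = c • (Tᵀ *ᵥ (fun _ => (1 : ℝ))) := by
      have h3 := congrArg (fun v => Tᵀ *ᵥ v) hc
      simpa [Matrix.mulVec_mulVec, ← Matrix.mul_assoc, hT, Matrix.mulVec_smul] using h3
    have hlast : (Jᵀ *ᵥ x) ⟨n - 1, by omega⟩ = 0 := by
      simp only [Matrix.mulVec, dotProduct, Matrix.transpose_apply, hJ,
        Matrix.of_apply]
      apply Finset.sum_eq_zero
      intro k _
      have : (k : ℕ) ≠ n - 1 := by omega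
      simp [this]
    have hTone : (Tᵀ *ᵥ (fun _ => (1 : ℝ))) ⟨n - 1, by omega⟩ = Real.sqrt n := by
      simp only [Matrix.mulVec, dotProduct, Matrix.transpose_apply, mul_one]
      rw [Finset.sum_congr rfl fun j _ => hTlast j]
      simp only [Finset.sum_const, Finset.card_univ, Fintype.card_fin, nsmul_eq_mul]
      have hn0 : (0:ℝ) < n := by positivity
      rw [one_div, mul_inv_eq_iff_eq_mul₀ (ne_of_gt (Real.sqrt_pos.mpr hn0))]
      exact (Real.mul_self_sqrt hn0.le).symm
    have hc0 : c = 0 := by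
      have := hlast
      rw [h2] at this
      simp only [Pi.smul_apply, smul_eq_mul, hTone] at this
      rcases mul_eq_zero.mp this with h | h
      · exact h
      · exact absurd h (by positivity)
    have h4 : Jᵀ *ᵥ x = 0 := by rw [h2, hc0, zero_smul]
    funext i
    have hi : (i : ℕ) < n := by omega
    have h5 := congrFun h4 ⟨i, hi⟩
    simp only [Matrix.mulVec, dotProduct, Matrix.transpose_apply, hJ,
      Matrix.of_apply, Pi.zero_apply] at h5
    rw [Finset.sum_eq_single i (fun k _ hk => by
      simp [Fin.val_ne_of_ne hk]) (by simp)] at h5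
    simpa using h5
  rw [hM]
  have hDpsd : (Matrix.diagonal a).PosSemidef := (Matrix.PosDef.diagonal ha).posSemidef
  have hpsd : (Bᵀ * Matrix.diagonal a * B).PosSemidef := by
    have := hDpsd.conjTranspose_mul_mul_same B
    simpa using this
  refine posDef_iff_dotProduct_mulVec.mpr ⟨hpsd.isHermitian, fun x hx => ?_⟩
  rcases lt_or_eq_of_le (hpsd.re_dotProduct_nonneg x) with h | h
  · simpa using h
  · exfalso
    have hz : dotProduct (star x) ((Bᵀ * Matrix.diagonal a * B) *ᵥ x) = 0 := by
      simpa using h.symm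
    have h6 : (Bᵀ * Matrix.diagonal a * B) *ᵥ x = 0 :=
      (hpsd.dotProduct_mulVec_zero_iff x).mp hz
    have h7 : dotProduct (B *ᵥ x) (Matrix.diagonal a *ᵥ (B *ᵥ x)) = 0 := by
      have : Bᵀ *ᵥ (Matrix.diagonal a *ᵥ (B *ᵥ x)) = 0 := by
        rw [Matrix.mulVec_mulVec, Matrix.mulVec_mulVec]; exact h6
      have key : dotProduct x (Bᵀ *ᵥ (Matrix.diagonal a *ᵥ (B *ᵥ x)))
          = dotProduct (B *ᵥ x) (Matrix.diagonal a *ᵥ (B *ᵥ x)) := by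
        rw [Matrix.dotProduct_mulVec, Matrix.vecMul_transpose]
      rw [← key, this, dotProduct_zero]
    have hBx : B *ᵥ x ≠ 0 := fun h => hx (hBinj x h)
    have := (Matrix.PosDef.diagonal ha).dotProduct_mulVec_pos hBx
    simp only [star_trivial] at this
    rw [h7] at this
    exact lt_irrefl 0 this
end

section
/- Let n ≥ 2, let L be a real symmetric positive semidefinite n×n matrix with L𝟙ₙ = 0 whose kernel is exactly span(𝟙ₙ), and let H = diag(a₁,…,aₙ) with aᵢ > 0. Assume there exists ε ∈ [0,1) such that for every y ∈ ℝⁿ with 𝟙ₙᵀy = 0 one has −ε yᵀy ≤ yᵀ(Iₙ − LHL)y ≤ ε yᵀy. Then for every q ∈ ℕ, the matrix A₁ = ∑_{p=0}^{q} (Iₙ − LHL)^p is symmetric positive definite. -/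
open Matrix Finset

/-- Under the convergent-eigenvalues assumption, the truncated
Neumann sum `A₁ = ∑_{p=0}^{q} (Iₙ − LHL)^p` is symmetric positive definite. -/
theorem truncated_sum_posdef
    (n : ℕ) (hn : 2 ≤ n)
    (L H : Matrix (Fin n) (Fin n) ℝ)
    (a : Fin n → ℝ) (ha : ∀ i, 0 < a i) (hH : H = Matrix.diagonal a)
    (hLsym : L.IsSymm) (hLpsd : L.PosSemidef)
    (hL1 : L *ᵥ (fun _ => (1 : ℝ)) = 0)
    (hker : ∀ x : Fin n → ℝ, L *ᵥ x = 0 ↔ ∃ c : ℝ, x = c • (fun _ => (1 : ℝ)))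
    (ε : ℝ) (hε0 : 0 ≤ ε) (hε1 : ε < 1)
    (heig : ∀ y : Fin n → ℝ, (fun _ => (1 : ℝ)) ⬝ᵥ y = 0 →
      -(ε * (y ⬝ᵥ y)) ≤ y ⬝ᵥ ((1 - L * H * L) *ᵥ y) ∧
      y ⬝ᵥ ((1 - L * H * L) *ᵥ y) ≤ ε * (y ⬝ᵥ y))
    (q : ℕ) :
    (∑ p ∈ Finset.range (q + 1), (1 - L * H * L) ^ p).PosDef := by
  set M : Matrix (Fin n) (Fin n) ℝ := 1 - L * H * L with hM
  -- symmetry of M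
  have hMsym : Mᴴ = M := by
    have hLt : Lᵀ = L := hLsym
    have hHt : Hᵀ = H := by rw [hH, Matrix.diagonal_transpose]
    simp [hM, Matrix.conjTranspose_sub, Matrix.conjTranspose_mul,
      Matrix.conjTranspose_eq_transpose_of_trivial, Matrix.transpose_mul, hLt, hHt,
      Matrix.mul_assoc]
  -- M * 𝟙 = 𝟙
  have hM1 : M *ᵥ (fun _ => (1 : ℝ)) = (fun _ => (1 : ℝ)) := by
    have : (L * H * L) *ᵥ (fun _ => (1 : ℝ)) = 0 := by
      rw [Matrix.mul_assoc, ← Matrix.mulVec_mulVec, ← Matrix.mulVec_mulVec, hL1]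
      simp
    simp [hM, Matrix.sub_mulVec, this]
  -- key: 1 + M is positive definite
  have hkey : (1 + M).PosDef := by
    rw [Matrix.posDef_iff_dotProduct_mulVec]
    constructor
    · exact Matrix.isHermitian_one.add hMsym
    · intro x hx
      obtain ⟨c, hc⟩ : ∃ c : ℝ, c = (∑ i, x i) / n := ⟨_, rfl⟩
      obtain ⟨y, hy⟩ : ∃ y : Fin n → ℝ, y = x - c • (fun _ => (1 : ℝ)) := ⟨_, rfl⟩
      have hn0 : (0 : ℝ) < n := by positivity
      have hy1 : (fun _ => (1 : ℝ)) ⬝ᵥ y = 0 := by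
        have h2 : (fun _ => (1 : ℝ)) ⬝ᵥ y = (∑ i, x i) - n * c := by
          simp [hy, dotProduct, Finset.sum_sub_distrib, mul_comm]
        rw [h2, hc]
        field_simp
        simp
      have hx' : x = y + c • (fun _ => (1 : ℝ)) := by simp [hy]
      have hone : (fun _ : Fin n => (1 : ℝ)) ⬝ᵥ (fun _ => (1 : ℝ)) = (n : ℝ) := by
        simp [dotProduct]
      -- 𝟙 ⬝ M y = 0
      have h1My : (fun _ => (1 : ℝ)) ⬝ᵥ (M *ᵥ y) = 0 := by
        have hvm : (fun _ => (1 : ℝ)) ᵥ* M = (fun _ => (1 : ℝ)) := by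
          rw [← Matrix.mulVec_transpose, ← Matrix.conjTranspose_eq_transpose_of_trivial,
            hMsym]
          exact hM1
        rw [Matrix.dotProduct_mulVec, hvm]
        exact hy1
      have hyM1 : y ⬝ᵥ (fun _ => (1 : ℝ)) = 0 := (dotProduct_comm _ _).trans hy1
      -- expand x ⬝ (M x)
      have hMx : x ⬝ᵥ (M *ᵥ x) = y ⬝ᵥ (M *ᵥ y) + c^2 * n := by
        rw [hx', Matrix.mulVec_add, Matrix.mulVec_smul, hM1]
        rw [add_dotProduct, smul_dotProduct, dotProduct_add, dotProduct_add,
          dotProduct_smul, dotProduct_smul]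
        rw [hyM1, h1My, hone]
        simp only [smul_eq_mul, mul_zero, add_zero]
        ring
      have hxx : x ⬝ᵥ x = y ⬝ᵥ y + c^2 * n := by
        rw [hx', add_dotProduct, smul_dotProduct, dotProduct_add, dotProduct_add,
          dotProduct_smul, dotProduct_smul, hyM1, hone, hy1]
        simp only [smul_eq_mul, mul_zero, add_zero]
        ring
      have hMylb := (heig y hy1).1
      have hyy : 0 ≤ y ⬝ᵥ y := Finset.sum_nonneg fun i _ => mul_self_nonneg (y i)
      have hpos : 0 < (1 - ε) * (y ⬝ᵥ y) + 2 * (c^2 * n) := by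
        rcases eq_or_ne y 0 with hy0 | hy0
        · have hc0 : c ≠ 0 := by
            intro hc0
            apply hx
            rw [hx', hy0, hc0]
            simp
          have : 0 < c^2 * n := by positivity
          rw [hy0]
          simpa using by linarith
        · have hyypos : 0 < y ⬝ᵥ y := by
            rcases lt_or_eq_of_le hyy with h | h
            · exact h
            · exact absurd ((dotProduct_self_eq_zero).mp h.symm) hy0
          have h1 : 0 < (1 - ε) * (y ⬝ᵥ y) := by
            have : 0 < 1 - ε := by linarith
            positivity
          nlinarith [sq_nonneg c, hn0]
      have : x ⬝ᵥ ((1 + M) *ᵥ x) = x ⬝ᵥ x + x ⬝ᵥ (M *ᵥ x) := by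
        rw [Matrix.add_mulVec, dotProduct_add, Matrix.one_mulVec]
      rw [show star x = x from rfl] at *
      rw [this, hxx, hMx]
      have : -(ε * (y ⬝ᵥ y)) ≤ y ⬝ᵥ (M *ᵥ y) := hMylb
      linarith
  -- partial sums are PSD, by two-step induction
  have hpsd : ∀ m, (∑ p ∈ Finset.range m, M ^ p).PosSemidef := by
    intro m
    induction m using Nat.twoStepInduction with
    | zero => simp [Matrix.PosSemidef.zero]
    | one => simp [Matrix.PosSemidef.one]
    | more m ih _ =>
      have hsum : (∑ p ∈ Finset.range (m + 2), M ^ p)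
          = (1 + M) + M * (∑ p ∈ Finset.range m, M ^ p) * M := by
        rw [Finset.sum_range_succ', Finset.sum_range_succ']
        rw [Finset.mul_sum, Finset.sum_mul]
        have : ∀ p, M ^ (p + 1 + 1) = M * M ^ p * M := by
          intro p
          rw [pow_succ, pow_succ']
        simp only [this, pow_zero, zero_add, pow_one]
        abel
      rw [hsum]
      have hconj : (M * (∑ p ∈ Finset.range m, M ^ p) * M).PosSemidef := by
        have := ih.mul_mul_conjTranspose_same M
        rwa [hMsym] at this
      exact (hkey.add_posSemidef hconj).posSemidef
  -- conclude
  rcases Nat.eq_zero_or_pos q with hq | hq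
  · subst hq
    simpa using Matrix.PosDef.one
  · obtain ⟨r, rfl⟩ : ∃ r, q = r + 1 := ⟨q - 1, (Nat.succ_pred_eq_of_pos hq).symm⟩
    have hsum : (∑ p ∈ Finset.range (r + 2), M ^ p)
        = (1 + M) + M * (∑ p ∈ Finset.range r, M ^ p) * M := by
      rw [Finset.sum_range_succ', Finset.sum_range_succ']
      rw [Finset.mul_sum, Finset.sum_mul]
      have : ∀ p, M ^ (p + 1 + 1) = M * M ^ p * M := by
        intro p
        rw [pow_succ, pow_succ']
      simp only [this, pow_zero, zero_add, pow_one]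
      abel
    rw [hsum]
    have hconj : (M * (∑ p ∈ Finset.range r, M ^ p) * M).PosSemidef := by
      have := (hpsd r).mul_mul_conjTranspose_same M
      rwa [hMsym] at this
    exact hkey.add_posSemidef hconj
end

section
/- Let L, H be arbitrary real n×n matrices and b ∈ ℝⁿ. For q ∈ ℕ define Φ_q : ℝⁿ → ℝⁿ by Φ_q(x) = x − L ∑_{p=0}^{q} (Iₙ − LHL)^p (Lb + LHx). Then Φ_q equals the (q+1)-fold composition of Φ₀ with itself: Φ_q = Φ₀^{∘(q+1)}. -/
open Matrix Finset

theorem dana_key (n : ℕ) (L H S : Matrix (Fin n) (Fin n) ℝ) (b x : Fin n → ℝ) :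
    (x - L *ᵥ (S *ᵥ (L *ᵥ b + (L * H) *ᵥ x))) - L *ᵥ
      (L *ᵥ b + (L * H) *ᵥ ((x - L *ᵥ (S *ᵥ (L *ᵥ b + (L * H) *ᵥ x)))))
    = x - L *ᵥ (((1 - L * H * L) * S + 1) *ᵥ (L *ᵥ b + (L * H) *ᵥ x)) := by
  rw [Matrix.sub_mul, Matrix.one_mul, add_mulVec, sub_mulVec, one_mulVec]
  simp only [mulVec_add, mulVec_sub, mulVec_mulVec, Matrix.mul_assoc]
  abel

/-- The DANA map with inner parameter `q` equals the `(q+1)`-fold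
composition of the DANA map with inner parameter `0`. -/
theorem dana_loop_conversion
    (n : ℕ)
    (L H : Matrix (Fin n) (Fin n) ℝ)
    (b : Fin n → ℝ)
    (Φ : ℕ → (Fin n → ℝ) → (Fin n → ℝ))
    (hΦ : ∀ q : ℕ, ∀ x : Fin n → ℝ, Φ q x = x - L *ᵥ
      ((∑ p ∈ Finset.range (q + 1), (1 - L * H * L) ^ p) *ᵥ (L *ᵥ b + (L * H) *ᵥ x)))
    (q : ℕ) :
    Φ q = (Φ 0)^[q + 1] := by
  have h0 : ∀ x : Fin n → ℝ, Φ 0 x = x - L *ᵥ (L *ᵥ b + (L * H) *ᵥ x) := by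
    intro x
    rw [hΦ]
    norm_num
  induction q with
  | zero => simp
  | succ q ih =>
    rw [Function.iterate_succ', ← ih]
    funext x
    rw [Function.comp_apply, h0, hΦ q, hΦ (q+1), geom_sum_succ]
    exact (dana_key n L H _ b x).symm
end

section
/- Let L, H be arbitrary real n×n matrices and b ∈ ℝⁿ, and for q ∈ ℕ define Φ_q(x) = x − L ∑_{p=0}^{q} (Iₙ − LHL)^p (Lb + LHx). If k_a, k_b ∈ ℕ and q_a, q_b ∈ ℕ satisfy k_a(q_a + 1) = k_b(q_b + 1), then the k_a-fold composition of Φ_{q_a} equals the k_b-fold composition of Φ_{q_b}; in particular, starting DANA from the same x⁰ yields x^{k_a} = x^{k_b}. -/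
open Matrix Finset

/-- If `k_a(q_a + 1) = k_b(q_b + 1)`, then running DANA for `k_a`
outer loops with inner parameter `q_a` equals running it for `k_b` outer loops
with inner parameter `q_b`; in particular the iterates from the same `x⁰` agree. -/
theorem dana_loop_equivalence
    (n : ℕ)
    (L H : Matrix (Fin n) (Fin n) ℝ)
    (b : Fin n → ℝ)
    (Φ : ℕ → (Fin n → ℝ) → (Fin n → ℝ))
    (hΦ : ∀ q : ℕ, ∀ x : Fin n → ℝ, Φ q x = x - L *ᵥ
      ((∑ p ∈ Finset.range (q + 1), (1 - L * H * L) ^ p) *ᵥ (L *ᵥ b + (L * H) *ᵥ x)))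
    (ka kb qa qb : ℕ)
    (h : ka * (qa + 1) = kb * (qb + 1)) :
    (Φ qa)^[ka] = (Φ qb)^[kb] ∧
    ∀ x0 : Fin n → ℝ, (Φ qa)^[ka] x0 = (Φ qb)^[kb] x0 := by
  set M : Matrix (Fin n) (Fin n) ℝ := 1 - L * H * L with hM
  have hc : ∀ p : ℕ, M ^ p * (M - 1) = (M - 1) * M ^ p := fun p =>
    (((Commute.refl M).sub_left (Commute.one_left M)).pow_right p).eq.symm
  have hgeom : ∀ q : ℕ, 1 - (L * H * L) * (∑ p ∈ Finset.range (q + 1), M ^ p)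
      = M ^ (q + 1) := by
    intro q
    have hcomm : (∑ p ∈ Finset.range (q + 1), M ^ p) * (M - 1)
        = (M - 1) * (∑ p ∈ Finset.range (q + 1), M ^ p) := by
      rw [Finset.sum_mul, Finset.mul_sum]
      exact Finset.sum_congr rfl fun p _ => hc p
    have hML : (L * H * L : Matrix (Fin n) (Fin n) ℝ) = 1 - M := by rw [hM]; abel
    calc 1 - (L * H * L) * (∑ p ∈ Finset.range (q + 1), M ^ p)
        = 1 - (1 - M) * (∑ p ∈ Finset.range (q + 1), M ^ p) := by rw [hML]
      _ = 1 + (M - 1) * (∑ p ∈ Finset.range (q + 1), M ^ p) := by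
          rw [← neg_sub M 1, neg_mul, sub_neg_eq_add]
      _ = 1 + (∑ p ∈ Finset.range (q + 1), M ^ p) * (M - 1) := by rw [hcomm]
      _ = 1 + (M ^ (q + 1) - 1) := by rw [geom_sum_mul]
      _ = M ^ (q + 1) := by abel
  have step : ∀ q x, Φ (q + 1) x = Φ 0 (Φ q x) := by
    intro q x
    rw [hΦ, hΦ, hΦ]
    set v : Fin n → ℝ := L *ᵥ b + (L * H) *ᵥ x with hv
    have h0 : (∑ p ∈ Finset.range (0 + 1), M ^ p) = 1 := by simp
    rw [h0, Matrix.one_mulVec]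
    rw [Matrix.mulVec_sub, Matrix.mulVec_mulVec, Matrix.mulVec_mulVec, Matrix.mulVec_mulVec, ← Matrix.mul_assoc]
    have hx : L *ᵥ b + ((L * H) *ᵥ x
          - (L * H * L * (∑ p ∈ Finset.range (q + 1), M ^ p)) *ᵥ v)
        = (1 - L * H * L * (∑ p ∈ Finset.range (q + 1), M ^ p)) *ᵥ v := by
      rw [Matrix.sub_mulVec, Matrix.one_mulVec, hv]; abel
    rw [hx, hgeom, Finset.sum_range_succ, mul_add, Matrix.add_mulVec, Matrix.mulVec_mulVec]
    abel
  have hiter : ∀ q, Φ q = (Φ 0)^[q + 1] := by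
    intro q
    induction q with
    | zero => simp
    | succ q ih =>
      funext x
      rw [step q x, ih]
      simp [Function.iterate_succ_apply']
  have key : ∀ k q : ℕ, (Φ q)^[k] = (Φ 0)^[k * (q + 1)] := by
    intro k q
    rw [hiter q, ← Function.iterate_mul, Nat.mul_comm]
  have main : (Φ qa)^[ka] = (Φ qb)^[kb] := by
    rw [key ka qa, key kb qb, h]
  exact ⟨main, fun x0 => by rw [main]⟩
end

section
/- Let n ≥ 1, H = diag(a₁,…,aₙ) with aᵢ > 0, b ∈ ℝⁿ, d ∈ ℝ, and let L be a real symmetric n×n matrix with L𝟙ₙ = 0. If x⋆ is the minimizer of f(x) = ½ xᵀHx + bᵀx over {x : 𝟙ₙᵀx = d}, then Lb + LHx⋆ = 0; consequently x⋆ is a fixed point of the DANA map Φ_q for every q ∈ ℕ. -/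
open Matrix Finset

/-- At the constrained minimizer `x⋆` one has `Lb + LHx⋆ = 0`, and
hence `x⋆` is a fixed point of the DANA map `Φ_q` for every `q`. -/
theorem minimizer_is_fixed_point
    (n : ℕ) (hn : 1 ≤ n)
    (a : Fin n → ℝ) (ha : ∀ i, 0 < a i)
    (H : Matrix (Fin n) (Fin n) ℝ) (hH : H = Matrix.diagonal a)
    (b : Fin n → ℝ) (d : ℝ)
    (L : Matrix (Fin n) (Fin n) ℝ)
    (hLsym : L.IsSymm)
    (hL1 : L *ᵥ (fun _ => (1 : ℝ)) = 0)
    (xstar : Fin n → ℝ)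
    (hfeas : (fun _ => (1 : ℝ)) ⬝ᵥ xstar = d)
    (hmin : ∀ x : Fin n → ℝ, (fun _ => (1 : ℝ)) ⬝ᵥ x = d →
      (1 / 2) * (xstar ⬝ᵥ (H *ᵥ xstar)) + b ⬝ᵥ xstar ≤
      (1 / 2) * (x ⬝ᵥ (H *ᵥ x)) + b ⬝ᵥ x) :
    L *ᵥ b + (L * H) *ᵥ xstar = 0 ∧
    ∀ q : ℕ, xstar - L *ᵥ
      ((∑ p ∈ Finset.range (q + 1), (1 - L * H * L) ^ p) *ᵥ
        (L *ᵥ b + (L * H) *ᵥ xstar)) = xstar := by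
  -- symmetry of H in the bilinear form
  have hsymm : ∀ u w : Fin n → ℝ, u ⬝ᵥ (H *ᵥ w) = w ⬝ᵥ (H *ᵥ u) := by
    intro u w
    subst hH
    simp only [dotProduct, Matrix.mulVec_diagonal]
    exact Finset.sum_congr rfl fun i _ => by ring
  -- key lemma: v orthogonal to ones implies v ⬝ (b + H xstar) = 0
  have key : ∀ v : Fin n → ℝ, (∑ i, v i) = 0 → v ⬝ᵥ (b + H *ᵥ xstar) = 0 := by
    intro v hv
    set c : ℝ := v ⬝ᵥ (b + H *ᵥ xstar) with hc
    set s : ℝ := v ⬝ᵥ (H *ᵥ v) with hsdef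
    have hs : 0 ≤ s := by
      rw [hsdef, hH]
      simp only [dotProduct, Matrix.mulVec_diagonal]
      apply Finset.sum_nonneg
      intro i _
      have := (ha i).le
      nlinarith [sq_nonneg (v i)]
    have hineq : ∀ t : ℝ, 0 ≤ t * c + t ^ 2 * s / 2 := by
      intro t
      have hfe : (fun _ => (1 : ℝ)) ⬝ᵥ (xstar + t • v) = d := by
        simp only [dotProduct_add, dotProduct_smul, smul_eq_mul]
        have : (fun _ => (1 : ℝ)) ⬝ᵥ v = ∑ i, v i := by
          simp [dotProduct]
        rw [hfeas, this, hv, mul_zero, add_zero]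
      have h := hmin (xstar + t • v) hfe
      have e1 : (xstar + t • v) ⬝ᵥ (H *ᵥ (xstar + t • v)) =
          xstar ⬝ᵥ (H *ᵥ xstar) + 2 * t * (v ⬝ᵥ (H *ᵥ xstar)) + t ^ 2 * s := by
        rw [Matrix.mulVec_add, Matrix.mulVec_smul]
        simp only [add_dotProduct, dotProduct_add, smul_dotProduct,
          dotProduct_smul, smul_eq_mul]
        rw [hsymm xstar v]
        rw [hsdef]
        ring
      have e2 : b ⬝ᵥ (xstar + t • v) = b ⬝ᵥ xstar + t * (b ⬝ᵥ v) := by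
        simp only [dotProduct_add, dotProduct_smul, smul_eq_mul]
      rw [e1, e2] at h
      have hcv : c = v ⬝ᵥ b + v ⬝ᵥ (H *ᵥ xstar) := by
        rw [hc, dotProduct_add]
      have hbv : b ⬝ᵥ v = v ⬝ᵥ b := dotProduct_comm b v
      have htc : t * c = t * (b ⬝ᵥ v) + t * (v ⬝ᵥ (H *ᵥ xstar)) := by
        rw [hcv, hbv]; ring
      linarith [h]
    by_cases hs0 : s = 0
    · have h1 := hineq (-c)
      rw [hs0] at h1
      nlinarith
    · have hspos : 0 < s := lt_of_le_of_ne hs (Ne.symm hs0)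
      have h1 := hineq (-c / s)
      have h2 : (-c / s) * c + (-c / s) ^ 2 * s / 2 = -c ^ 2 / (2 * s) := by
        field_simp
        ring
      rw [h2, le_div_iff₀ (by positivity : (0:ℝ) < 2 * s)] at h1
      nlinarith [sq_nonneg c]
  have h1 : L *ᵥ b + (L * H) *ᵥ xstar = 0 := by
    have : L *ᵥ b + (L * H) *ᵥ xstar = L *ᵥ (b + H *ᵥ xstar) := by
      rw [← Matrix.mulVec_mulVec, Matrix.mulVec_add]
    rw [this]
    funext i
    have hrow : (∑ j, L i j) = 0 := by
      have := congrFun hL1 i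
      simpa [Matrix.mulVec, dotProduct] using this
    have := key (fun j => L i j) hrow
    simpa [Matrix.mulVec, dotProduct] using this
  refine ⟨h1, fun q => ?_⟩
  rw [h1]
  simp
end

section
/- Let n ≥ 2, let L be a real symmetric n×n matrix whose kernel is exactly span(𝟙ₙ), let H = diag(a₁,…,aₙ) with aᵢ > 0, b ∈ ℝⁿ, d ∈ ℝ, and let x⋆ be the unique minimizer of f(x) = ½ xᵀHx + bᵀx over {x : 𝟙ₙᵀx = d}. Then for every x with 𝟙ₙᵀx = d, the vector w = x − x⋆ is the unique solution of the system L H w = Lb + LHx, 𝟙ₙᵀ w = 0. -/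
open Matrix

/-- For any feasible `x`, the error `w = x − x⋆` is the unique
solution of the system `LHw = Lb + LHx`, `𝟙ᵀw = 0`. -/
theorem error_unique_solution
    (n : ℕ) (hn : 2 ≤ n)
    (L : Matrix (Fin n) (Fin n) ℝ)
    (hLsym : L.IsSymm)
    (hker : ∀ y : Fin n → ℝ, L *ᵥ y = 0 ↔ ∃ c : ℝ, y = c • (fun _ => (1 : ℝ)))
    (a : Fin n → ℝ) (ha : ∀ i, 0 < a i)
    (H : Matrix (Fin n) (Fin n) ℝ) (hH : H = Matrix.diagonal a)
    (b : Fin n → ℝ) (d : ℝ)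
    (xstar : Fin n → ℝ)
    (hfeas : (fun _ => (1 : ℝ)) ⬝ᵥ xstar = d)
    (hmin : ∀ x : Fin n → ℝ, (fun _ => (1 : ℝ)) ⬝ᵥ x = d →
      (1 / 2) * (xstar ⬝ᵥ (H *ᵥ xstar)) + b ⬝ᵥ xstar ≤
      (1 / 2) * (x ⬝ᵥ (H *ᵥ x)) + b ⬝ᵥ x)
    (huniq : ∀ y : Fin n → ℝ, (fun _ => (1 : ℝ)) ⬝ᵥ y = d →
      (∀ x : Fin n → ℝ, (fun _ => (1 : ℝ)) ⬝ᵥ x = d →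
        (1 / 2) * (y ⬝ᵥ (H *ᵥ y)) + b ⬝ᵥ y ≤ (1 / 2) * (x ⬝ᵥ (H *ᵥ x)) + b ⬝ᵥ x) →
      y = xstar)
    (x : Fin n → ℝ) (hx : (fun _ => (1 : ℝ)) ⬝ᵥ x = d) :
    ((L * H) *ᵥ (x - xstar) = L *ᵥ b + (L * H) *ᵥ x ∧
      (fun _ => (1 : ℝ)) ⬝ᵥ (x - xstar) = 0) ∧
    ∀ w : Fin n → ℝ,
      (L * H) *ᵥ w = L *ᵥ b + (L * H) *ᵥ x →
      (fun _ => (1 : ℝ)) ⬝ᵥ w = 0 →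
      w = x - xstar := by
  subst hH
  have npos : 0 < n := by omega
  -- L kills constants
  have hL1 : L *ᵥ (fun _ => (1:ℝ)) = 0 := by
    rw [hker]; exact ⟨1, by funext i; simp⟩
  -- stationarity: for all mean-zero z, z·(H xstar + b) = 0
  have key : ∀ z : Fin n → ℝ, (fun _ => (1:ℝ)) ⬝ᵥ z = 0 →
      z ⬝ᵥ (Matrix.diagonal a *ᵥ xstar) + b ⬝ᵥ z = 0 := by
    intro z hz
    set A := z ⬝ᵥ (Matrix.diagonal a *ᵥ z) with hA
    set B := z ⬝ᵥ (Matrix.diagonal a *ᵥ xstar) + b ⬝ᵥ z with hB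
    have hA0 : 0 ≤ A := by
      rw [hA]
      simp only [dotProduct, Matrix.mulVec_diagonal]
      apply Finset.sum_nonneg; intro i _
      have := (ha i).le; nlinarith [sq_nonneg (z i)]
    have hineq : ∀ s : ℝ, 0 ≤ s * B + s^2/2 * A := by
      intro s
      have hfeas' : (fun _ => (1:ℝ)) ⬝ᵥ (xstar + s • z) = d := by
        rw [dotProduct_add, dotProduct_smul, hz, hfeas]; simp
      have h := hmin (xstar + s • z) hfeas'
      have hexp : (xstar + s • z) ⬝ᵥ (Matrix.diagonal a *ᵥ (xstar + s • z)) =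
          xstar ⬝ᵥ (Matrix.diagonal a *ᵥ xstar) + 2*s*(z ⬝ᵥ (Matrix.diagonal a *ᵥ xstar))
            + s^2 * A := by
        rw [hA]
        simp only [dotProduct, Matrix.mulVec_diagonal, Pi.add_apply, Pi.smul_apply, smul_eq_mul,
          Finset.mul_sum]
        rw [← Finset.sum_add_distrib, ← Finset.sum_add_distrib]
        apply Finset.sum_congr rfl; intro i _; ring
      have hbx : b ⬝ᵥ (xstar + s • z) = b ⬝ᵥ xstar + s * (b ⬝ᵥ z) := by
        rw [dotProduct_add, dotProduct_smul]; simp [smul_eq_mul]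
      rw [hexp, hbx] at h
      rw [hB]; linarith
    by_contra hB0
    have h := hineq (-B/(A+1))
    have ht : (0:ℝ) < A + 1 := by linarith
    have hB2 : 0 < B^2 := by positivity
    have keyq : -B/(A+1) * B + (-B/(A+1))^2/2 * A
        = (B^2 * (-(A+1) + A/2)) / (A+1)^2 := by field_simp
    rw [keyq] at h
    have hnum : B^2 * (-(A+1) + A/2) < 0 := by
      have h1 : (0:ℝ) < 1 + A/2 := by linarith
      nlinarith [mul_pos hB2 h1]
    nlinarith [div_neg_of_neg_of_pos hnum (by positivity : (0:ℝ) < (A+1)^2)]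
  -- the gradient is constant
  set g : Fin n → ℝ := fun i => a i * xstar i + b i with hg
  have hgconst : ∀ i j : Fin n, g i = g j := by
    intro i j
    rcases eq_or_ne i j with rfl | hij
    · rfl
    · have hz : (fun _ => (1:ℝ)) ⬝ᵥ (Pi.single i (1:ℝ) - Pi.single j 1) = 0 := by
        simp [dotProduct, Pi.single_apply, sub_mul, Finset.sum_sub_distrib]
      have h := key _ hz
      have e1 : (Pi.single i (1:ℝ) - Pi.single j 1) ⬝ᵥ (Matrix.diagonal a *ᵥ xstar)
          = a i * xstar i - a j * xstar j := by
        simp [dotProduct, Pi.single_apply, sub_mul, Finset.sum_sub_distrib, ite_mul,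
          Matrix.mulVec_diagonal, Finset.sum_ite_eq]
      have e2 : b ⬝ᵥ (Pi.single i (1:ℝ) - Pi.single j 1) = b i - b j := by
        simp [dotProduct, Pi.single_apply, mul_sub, Finset.sum_sub_distrib, mul_ite,
          Finset.sum_ite_eq']
      rw [e1, e2] at h
      rw [hg]; dsimp only; linarith
  set i0 : Fin n := ⟨0, npos⟩ with hi0
  have hstat : Matrix.diagonal a *ᵥ xstar + b = (g i0) • (fun _ => (1:ℝ)) := by
    funext i
    have : (Matrix.diagonal a *ᵥ xstar + b) i = g i := by
      simp [hg, Matrix.mulVec_diagonal]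
    rw [this, hgconst i i0]; simp
  have hLb : L *ᵥ (Matrix.diagonal a *ᵥ xstar) = -(L *ᵥ b) := by
    have h0 : L *ᵥ (Matrix.diagonal a *ᵥ xstar + b) = 0 := by
      rw [hstat, Matrix.mulVec_smul, hL1, smul_zero]
    rw [Matrix.mulVec_add] at h0
    linear_combination (norm := module) h0
  -- first part
  have part1 : (L * Matrix.diagonal a) *ᵥ (x - xstar) = L *ᵥ b + (L * Matrix.diagonal a) *ᵥ x := by
    rw [← Matrix.mulVec_mulVec, ← Matrix.mulVec_mulVec, Matrix.mulVec_sub, Matrix.mulVec_sub, hLb]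
    abel
  have part2 : (fun _ => (1:ℝ)) ⬝ᵥ (x - xstar) = 0 := by
    rw [dotProduct_sub, hx, hfeas, sub_self]
  refine ⟨⟨part1, part2⟩, ?_⟩
  intro w hw1 hw2
  set u := w - (x - xstar) with hu
  have hLu : L *ᵥ (Matrix.diagonal a *ᵥ u) = 0 := by
    rw [Matrix.mulVec_mulVec, hu, Matrix.mulVec_sub, hw1, part1, sub_self]
  obtain ⟨c, hc⟩ := (hker _).mp hLu
  have huc : ∀ i, a i * u i = c := by
    intro i
    have := congrFun hc i
    simpa [Matrix.mulVec_diagonal] using this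
  have hsum : ∑ i, u i = 0 := by
    have : (fun _ => (1:ℝ)) ⬝ᵥ u = 0 := by
      rw [hu, dotProduct_sub, hw2, part2, sub_self]
    simpa [dotProduct] using this
  have huval : ∀ i, u i = c / a i := by
    intro i
    have h1 := huc i
    have h2 : a i ≠ 0 := ne_of_gt (ha i)
    field_simp
    linarith [h1]
  have hc0 : c = 0 := by
    by_contra hc0
    have hsum2 : ∑ i, u i = c * ∑ i : Fin n, (a i)⁻¹ := by
      rw [Finset.mul_sum]
      apply Finset.sum_congr rfl
      intro i _; rw [huval i]; field_simp
    have hpos : 0 < ∑ i : Fin n, (a i)⁻¹ := by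
      apply Finset.sum_pos
      · intro i _; exact inv_pos.mpr (ha i)
      · exact Finset.univ_nonempty_iff.mpr ⟨i0⟩
    rw [hsum2] at hsum
    rcases mul_eq_zero.mp hsum with h | h
    · exact hc0 h
    · linarith
  have hu0 : u = 0 := by
    funext i
    have := huval i
    rw [hc0, zero_div] at this
    simpa using this
  exact sub_eq_zero.mp hu0
end

section
/- Let n ≥ 2, let L be a real symmetric positive semidefinite n×n matrix with L𝟙ₙ = 0 whose kernel is exactly span(𝟙ₙ), let H = diag(a₁,…,aₙ) with aᵢ > 0, b ∈ ℝⁿ, d ∈ ℝ, and assume there exists ε ∈ [0,1) such that for every y with 𝟙ₙᵀy = 0, −ε yᵀy ≤ yᵀ(Iₙ − LHL)y ≤ ε yᵀy. Let x⋆ be the unique minimizer of f(x) = ½ xᵀHx + bᵀx over {x : 𝟙ₙᵀx = d}, and let G be a real symmetric n×n matrix satisfying L G = Iₙ − 𝟙ₙ𝟙ₙᵀ/n and G𝟙ₙ = 0 (such G exists and is unique). Define V(x) = (x − x⋆)ᵀ G² (x − x⋆). Then for every q ∈ ℕ and every x with 𝟙ₙᵀx = d and x ≠ x⋆, the DANA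 map Φ_q(x) = x − L ∑_{p=0}^{q} (Iₙ − LHL)^p (Lb + LHx) satisfies V(Φ_q(x)) < V(x). -/
open Matrix Finset

set_option maxHeartbeats 1000000 in
/-- The Lyapunov function `V(x) = (x − x⋆)ᵀ G² (x − x⋆)`, with `G`
the pseudoinverse of `L`, strictly decreases along the DANA dynamics at every
feasible `x ≠ x⋆`, for every inner parameter `q`. -/
theorem dana_lyapunov_decrease
    (n : ℕ) (hn : 2 ≤ n)
    (L H : Matrix (Fin n) (Fin n) ℝ)
    (a : Fin n → ℝ) (ha : ∀ i, 0 < a i) (hH : H = Matrix.diagonal a)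
    (hLsym : L.IsSymm) (hLpsd : L.PosSemidef)
    (hL1 : L *ᵥ (fun _ => (1 : ℝ)) = 0)
    (hker : ∀ y : Fin n → ℝ, L *ᵥ y = 0 ↔ ∃ c : ℝ, y = c • (fun _ => (1 : ℝ)))
    (b : Fin n → ℝ) (d : ℝ)
    (ε : ℝ) (hε0 : 0 ≤ ε) (hε1 : ε < 1)
    (heig : ∀ y : Fin n → ℝ, (fun _ => (1 : ℝ)) ⬝ᵥ y = 0 →
      -(ε * (y ⬝ᵥ y)) ≤ y ⬝ᵥ ((1 - L * H * L) *ᵥ y) ∧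
      y ⬝ᵥ ((1 - L * H * L) *ᵥ y) ≤ ε * (y ⬝ᵥ y))
    (xstar : Fin n → ℝ)
    (hfeas : (fun _ => (1 : ℝ)) ⬝ᵥ xstar = d)
    (hmin : ∀ x : Fin n → ℝ, (fun _ => (1 : ℝ)) ⬝ᵥ x = d →
      (1 / 2) * (xstar ⬝ᵥ (H *ᵥ xstar)) + b ⬝ᵥ xstar ≤
      (1 / 2) * (x ⬝ᵥ (H *ᵥ x)) + b ⬝ᵥ x)
    (huniq : ∀ y : Fin n → ℝ, (fun _ => (1 : ℝ)) ⬝ᵥ y = d →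
      (∀ x : Fin n → ℝ, (fun _ => (1 : ℝ)) ⬝ᵥ x = d →
        (1 / 2) * (y ⬝ᵥ (H *ᵥ y)) + b ⬝ᵥ y ≤ (1 / 2) * (x ⬝ᵥ (H *ᵥ x)) + b ⬝ᵥ x) →
      y = xstar)
    (G : Matrix (Fin n) (Fin n) ℝ)
    (hGsym : G.IsSymm)
    (hLG : L * G = 1 - (n : ℝ)⁻¹ • (Matrix.of fun (_ : Fin n) (_ : Fin n) => (1 : ℝ)))
    (hG1 : G *ᵥ (fun _ => (1 : ℝ)) = 0)
    (V : (Fin n → ℝ) → ℝ)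
    (hV : ∀ x : Fin n → ℝ, V x = (x - xstar) ⬝ᵥ ((G * G) *ᵥ (x - xstar))) :
    ∀ q : ℕ, ∀ x : Fin n → ℝ, (fun _ => (1 : ℝ)) ⬝ᵥ x = d → x ≠ xstar →
      V (x - L *ᵥ ((∑ p ∈ Finset.range (q + 1), (1 - L * H * L) ^ p) *ᵥ
        (L *ᵥ b + (L * H) *ᵥ x))) < V x := by
  intro q x hx hne
  set one : Fin n → ℝ := (fun _ => (1 : ℝ)) with hone
  set M : Matrix (Fin n) (Fin n) ℝ := 1 - L * H * L with hMdef
  set J : Matrix (Fin n) (Fin n) ℝ :=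
    Matrix.of fun (_ : Fin n) (_ : Fin n) => (1 : ℝ) with hJdef
  have hn0 : (n : ℝ) ≠ 0 := by positivity
  have honeone : one ⬝ᵥ one = (n : ℝ) := by
    simp [one, dotProduct]
  have hdnn : ∀ y : Fin n → ℝ, 0 ≤ y ⬝ᵥ y := fun y =>
    Finset.sum_nonneg (fun i _ => mul_self_nonneg _)
  have hHt : Hᵀ = H := by rw [hH, Matrix.diagonal_transpose]
  have hMsym : Mᵀ = M := by
    simp only [hMdef, Matrix.transpose_sub, Matrix.transpose_one, Matrix.transpose_mul,
      hLsym.eq, hHt]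
    rw [Matrix.mul_assoc]
  have swap : ∀ (A : Matrix (Fin n) (Fin n) ℝ), Aᵀ = A → ∀ y z : Fin n → ℝ,
      y ⬝ᵥ (A *ᵥ z) = (A *ᵥ y) ⬝ᵥ z := by
    intro A hA y z
    rw [Matrix.dotProduct_mulVec, ← Matrix.mulVec_transpose, hA]
  have hJv : ∀ z : Fin n → ℝ, J *ᵥ z = (one ⬝ᵥ z) • one := by
    intro z; funext i
    simp [hJdef, Matrix.mulVec, dotProduct, one]
  -- Step A: L *ᵥ (b + H *ᵥ xstar) = 0
  set w : Fin n → ℝ := b + H *ᵥ xstar with hwdef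
  have horth : ∀ z : Fin n → ℝ, one ⬝ᵥ z = 0 → w ⬝ᵥ z = 0 := by
    intro z hz
    set g : ℝ := w ⬝ᵥ z with hg
    set h : ℝ := z ⬝ᵥ (H *ᵥ z) with hh
    have hgz : g = b ⬝ᵥ z + z ⬝ᵥ (H *ᵥ xstar) := by
      rw [hg, hwdef, add_dotProduct, dotProduct_comm (H *ᵥ xstar) z]
    have hkey : ∀ t : ℝ, 0 ≤ t * g + t ^ 2 / 2 * h := by
      intro t
      have hfe : one ⬝ᵥ (xstar + t • z) = d := by
        rw [dotProduct_add, dotProduct_smul, hfeas, hz]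
        simp
      have hmin' := hmin (xstar + t • z) hfe
      have hsw : xstar ⬝ᵥ (H *ᵥ z) = z ⬝ᵥ (H *ᵥ xstar) := by
        rw [swap H hHt, dotProduct_comm]
      have hexp : (1 / 2) * ((xstar + t • z) ⬝ᵥ (H *ᵥ (xstar + t • z)))
            + b ⬝ᵥ (xstar + t • z)
          = (1 / 2) * (xstar ⬝ᵥ (H *ᵥ xstar)) + b ⬝ᵥ xstar
            + (t * g + t ^ 2 / 2 * h) := by
        rw [hgz, hh]
        simp only [Matrix.mulVec_add, Matrix.mulVec_smul, dotProduct_add,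
          add_dotProduct, dotProduct_smul, smul_dotProduct,
          smul_eq_mul]
        rw [hsw]; ring
      rw [hexp] at hmin'
      linarith
    have hh0 : 0 ≤ h := by
      rw [hh, hH]
      refine Finset.sum_nonneg (fun i _ => ?_)
      have := Matrix.mulVec_diagonal a z i
      have h1 : z i * (Matrix.diagonal a *ᵥ z) i = a i * z i ^ 2 := by
        rw [this]; ring
      rw [h1]; exact mul_nonneg (ha i).le (sq_nonneg _)
    rcases eq_or_lt_of_le hh0 with hh1 | hh1
    · have p1 := hkey 1
      have p2 := hkey (-1)
      rw [← hh1] at p1 p2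
      simp at p1 p2
      linarith
    · have p := hkey (-g / h)
      have : -(g ^ 2) / (2 * h) ≥ 0 := by
        have : (-g / h) * g + (-g / h) ^ 2 / 2 * h = -(g ^ 2) / (2 * h) := by
          field_simp; ring
        linarith [p, this.symm ▸ p]
      have hg2 : g ^ 2 ≤ 0 := by
        rw [ge_iff_le, le_div_iff₀ (by linarith : (0:ℝ) < 2 * h)] at this
        nlinarith
      nlinarith [sq_nonneg g]
  have hLw : L *ᵥ w = 0 := by
    set c : ℝ := (one ⬝ᵥ w) / n with hc
    set z0 : Fin n → ℝ := w - c • one with hz0def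
    have hz0 : one ⬝ᵥ z0 = 0 := by
      rw [hz0def, dotProduct_sub, dotProduct_smul, honeone, hc,
        smul_eq_mul]
      field_simp
      ring
    have h1 := horth z0 hz0
    have h2 : z0 ⬝ᵥ z0 = 0 := by
      have e1 : z0 ⬝ᵥ z0 = (w - c • one) ⬝ᵥ z0 := by rw [← hz0def]
      rw [e1, sub_dotProduct, smul_dotProduct, smul_eq_mul, h1, hz0]
      ring
    have hz00 : z0 = 0 := dotProduct_self_eq_zero.mp h2
    have hw : w = c • one := by
      have := sub_eq_zero.mp hz00
      rw [this]
    rw [hw, Matrix.mulVec_smul, hL1, smul_zero]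
  -- basic facts about M and e, u
  have hMone : M *ᵥ one = one := by
    rw [hMdef, Matrix.sub_mulVec, Matrix.one_mulVec, ← Matrix.mulVec_mulVec, hL1]
    simp
  have hMperp : ∀ z : Fin n → ℝ, one ⬝ᵥ z = 0 → one ⬝ᵥ (M *ᵥ z) = 0 := by
    intro z hz
    rw [swap M hMsym, hMone, hz]
  set e : Fin n → ℝ := x - xstar with hedef
  have he1 : one ⬝ᵥ e = 0 := by
    rw [hedef, dotProduct_sub, hx, hfeas, sub_self]
  set u : Fin n → ℝ := G *ᵥ e with hudef
  have hu1 : one ⬝ᵥ u = 0 := by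
    rw [hudef, swap G hGsym.eq, hG1, zero_dotProduct]
  have hLu : L *ᵥ u = e := by
    rw [hudef, Matrix.mulVec_mulVec, hLG, Matrix.sub_mulVec, Matrix.one_mulVec,
      Matrix.smul_mulVec, hJv, he1]
    simp
  have hGL : G * L = 1 - (n : ℝ)⁻¹ • J := by
    have h := congrArg Matrix.transpose hLG
    rwa [Matrix.transpose_mul, hGsym.eq, hLsym.eq, Matrix.transpose_sub,
      Matrix.transpose_one, Matrix.transpose_smul,
      show Jᵀ = J from by funext i j; simp [hJdef, Matrix.transpose]] at h
  -- the update direction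
  set S : Matrix (Fin n) (Fin n) ℝ := ∑ p ∈ Finset.range (q + 1), M ^ p with hSdef
  have hrhs : L *ᵥ b + (L * H) *ᵥ x = (L * H) *ᵥ e := by
    have h1 : L *ᵥ b + (L * H) *ᵥ x = L *ᵥ (b + H *ᵥ x) := by
      rw [Matrix.mulVec_add, Matrix.mulVec_mulVec]
    have h2 : b + H *ᵥ x = w + H *ᵥ e := by
      rw [hwdef, hedef, Matrix.mulVec_sub]; abel
    rw [h1, h2, Matrix.mulVec_add, hLw, zero_add, Matrix.mulVec_mulVec]
  set z1 : Fin n → ℝ := S *ᵥ ((L * H) *ᵥ e) with hz1def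
  have hz1u : z1 = u - M ^ (q + 1) *ᵥ u := by
    have hgeo : S * (1 - M) = 1 - M ^ (q + 1) := by
      have h := geom_sum_mul M (q + 1)
      rw [hSdef]
      calc (∑ p ∈ Finset.range (q + 1), M ^ p) * (1 - M)
          = -((∑ p ∈ Finset.range (q + 1), M ^ p) * (M - 1)) := by
            rw [← mul_neg, neg_sub]
        _ = -(M ^ (q + 1) - 1) := by rw [h]
        _ = 1 - M ^ (q + 1) := by rw [neg_sub]
    have hLHL : L * H * L = 1 - M := by rw [hMdef, sub_sub_cancel]
    have hkey : S * (L * H) * L = 1 - M ^ (q + 1) := by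
      rw [Matrix.mul_assoc S (L * H) L, hLHL, hgeo]
    rw [hz1def, ← hLu, Matrix.mulVec_mulVec, Matrix.mulVec_mulVec, hkey,
      Matrix.sub_mulVec, Matrix.one_mulVec]
  have hz1perp : one ⬝ᵥ z1 = 0 := by
    rw [hz1u, dotProduct_sub, hu1]
    have hpow : ∀ k : ℕ, one ⬝ᵥ (M ^ k *ᵥ u) = 0 := by
      intro k
      induction k with
      | zero => simpa using hu1
      | succ k ih =>
        rw [pow_succ', ← Matrix.mulVec_mulVec]
        exact hMperp _ ih
    rw [hpow (q + 1)]; ring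
  -- error after the step, in G-coordinates
  set Φ : Fin n → ℝ := x - L *ᵥ (S *ᵥ (L *ᵥ b + (L * H) *ᵥ x)) with hΦdef
  have hΦe : Φ - xstar = e - L *ᵥ z1 := by
    rw [hΦdef, hedef, hz1def, hrhs]; abel
  have hGΦ : G *ᵥ (Φ - xstar) = M ^ (q + 1) *ᵥ u := by
    rw [hΦe, Matrix.mulVec_sub, ← hudef, Matrix.mulVec_mulVec, hGL,
      Matrix.sub_mulVec, Matrix.one_mulVec, Matrix.smul_mulVec, hJv, hz1perp]
    rw [hz1u]
    simp
  -- quadratic form as squared norm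
  have hVform : ∀ y : Fin n → ℝ, y ⬝ᵥ ((G * G) *ᵥ y) = (G *ᵥ y) ⬝ᵥ (G *ᵥ y) := by
    intro y
    rw [← Matrix.mulVec_mulVec, swap G hGsym.eq]
  -- contraction of M on the orthogonal complement of one
  have hpol : ∀ y z : Fin n → ℝ, one ⬝ᵥ y = 0 → one ⬝ᵥ z = 0 →
      4 * (y ⬝ᵥ (M *ᵥ z)) ≤ 2 * ε * (y ⬝ᵥ y + z ⬝ᵥ z) := by
    intro y z hy hz
    have h1 := (heig (y + z) (by rw [dotProduct_add, hy, hz, add_zero])).2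
    have h2 := (heig (y - z) (by rw [dotProduct_sub, hy, hz, sub_zero])).1
    have hsw : z ⬝ᵥ (M *ᵥ y) = y ⬝ᵥ (M *ᵥ z) := by
      rw [swap M hMsym, dotProduct_comm]
    have hc : z ⬝ᵥ y = y ⬝ᵥ z := dotProduct_comm z y
    simp only [Matrix.mulVec_add, Matrix.mulVec_sub, dotProduct_add,
      dotProduct_sub, add_dotProduct, sub_dotProduct] at h1 h2
    rw [hsw] at h1 h2
    rw [hc] at h1 h2
    linarith
  have hcontr : ∀ v : Fin n → ℝ, one ⬝ᵥ v = 0 →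
      (M *ᵥ v) ⬝ᵥ (M *ᵥ v) ≤ ε ^ 2 * (v ⬝ᵥ v) := by
    intro v hv
    by_cases hw0 : (M *ᵥ v) ⬝ᵥ (M *ᵥ v) = 0
    · rw [hw0]
      have := hdnn v
      positivity
    · have hβpos : 0 < (M *ᵥ v) ⬝ᵥ (M *ᵥ v) := (hdnn _).lt_of_ne (Ne.symm hw0)
      have hv0 : v ≠ 0 := by
        intro h; apply hw0; rw [h, Matrix.mulVec_zero, dotProduct_zero]
      have hαpos : 0 < v ⬝ᵥ v := (hdnn v).lt_of_ne
        (fun h => hv0 (dotProduct_self_eq_zero.mp h.symm))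
      set α : ℝ := Real.sqrt (v ⬝ᵥ v) with hα
      set β : ℝ := Real.sqrt ((M *ᵥ v) ⬝ᵥ (M *ᵥ v)) with hβ
      have hα2 : α ^ 2 = v ⬝ᵥ v := Real.sq_sqrt (le_of_lt hαpos)
      have hβ2 : β ^ 2 = (M *ᵥ v) ⬝ᵥ (M *ᵥ v) := Real.sq_sqrt (le_of_lt hβpos)
      have hαp : 0 < α := Real.sqrt_pos.mpr hαpos
      have hβp : 0 < β := Real.sqrt_pos.mpr hβpos
      have hperp : one ⬝ᵥ (M *ᵥ v) = 0 := hMperp v hv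
      have h4 := hpol (β • v) (α • (M *ᵥ v))
        (by rw [dotProduct_smul, hv, smul_zero])
        (by rw [dotProduct_smul, hperp, smul_zero])
      have hvMw : v ⬝ᵥ (M *ᵥ (M *ᵥ v)) = (M *ᵥ v) ⬝ᵥ (M *ᵥ v) := by
        rw [swap M hMsym]
      simp only [Matrix.mulVec_smul, dotProduct_smul, smul_dotProduct,
        smul_eq_mul] at h4
      rw [hvMw] at h4
      rw [← hα2, ← hβ2] at h4
      have hβεα : β ≤ ε * α := by
        nlinarith [mul_pos hαp (mul_pos hβp hβp)]
      calc (M *ᵥ v) ⬝ᵥ (M *ᵥ v) = β ^ 2 := hβ2.symm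
        _ ≤ (ε * α) ^ 2 := by nlinarith
        _ = ε ^ 2 * (v ⬝ᵥ v) := by rw [mul_pow, hα2]
  -- iterate the contraction
  have hiter : ∀ k : ℕ, one ⬝ᵥ (M ^ k *ᵥ u) = 0 ∧
      (M ^ k *ᵥ u) ⬝ᵥ (M ^ k *ᵥ u) ≤ u ⬝ᵥ u := by
    intro k
    induction k with
    | zero => constructor
              · simpa using hu1
              · simp
    | succ k ih =>
      have hstep : M ^ (k + 1) *ᵥ u = M *ᵥ (M ^ k *ᵥ u) := by
        rw [pow_succ', ← Matrix.mulVec_mulVec]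
      constructor
      · rw [hstep]; exact hMperp _ ih.1
      · rw [hstep]
        have hc := hcontr _ ih.1
        have hε2 : ε ^ 2 ≤ 1 := by nlinarith
        nlinarith [hdnn (M ^ k *ᵥ u), ih.2]
  -- conclude
  have hu0 : 0 < u ⬝ᵥ u := by
    rcases (hdnn u).lt_or_eq with h | h
    · exact h
    · exfalso
      have hu00 : u = 0 := dotProduct_self_eq_zero.mp h.symm
      have : e = 0 := by rw [← hLu, hu00, Matrix.mulVec_zero]
      exact hne (sub_eq_zero.mp this)
  have hVx : V x = u ⬝ᵥ u := by rw [hV x, ← hedef, hVform, ← hudef]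
  have hVΦ : V Φ = (M ^ (q + 1) *ᵥ u) ⬝ᵥ (M ^ (q + 1) *ᵥ u) := by
    rw [hV Φ, hVform, hGΦ]
  have hfinal : (M ^ (q + 1) *ᵥ u) ⬝ᵥ (M ^ (q + 1) *ᵥ u) < u ⬝ᵥ u := by
    have hstep : M ^ (q + 1) *ᵥ u = M *ᵥ (M ^ q *ᵥ u) := by
      rw [pow_succ', ← Matrix.mulVec_mulVec]
    rw [hstep]
    have h1 := hcontr _ (hiter q).1
    have h2 := (hiter q).2
    have hε2 : ε ^ 2 < 1 := by nlinarith
    calc (M *ᵥ (M ^ q *ᵥ u)) ⬝ᵥ (M *ᵥ (M ^ q *ᵥ u))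
        ≤ ε ^ 2 * ((M ^ q *ᵥ u) ⬝ᵥ (M ^ q *ᵥ u)) := h1
      _ ≤ ε ^ 2 * (u ⬝ᵥ u) := mul_le_mul_of_nonneg_left h2 (sq_nonneg ε)
      _ < 1 * (u ⬝ᵥ u) := mul_lt_mul_of_pos_right hε2 hu0
      _ = u ⬝ᵥ u := one_mul _
  rw [hVΦ, hVx]
  exact hfinal
end
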